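/- (Interval property.) Let x : ℤ → ℤ be any integer-valued sequence and let i ∈ ℤ satisfy R_x(i) > i. Then every integer j with i ≤ j < R_x(i) is a descendant of R_x(i), i.e. there exists m ≥ 1 with R_x^m(j) = R_x(i). -/
import Mathlib


attribute [local instance] Classical.propDecidable

/-- The record map of an integer sequence: `n` is sent to the least integer `j > n`
with `∑_{l=n}^{j-1} x l ≥ 0` if such `j` exists, and to `n` otherwise. -/
noncomputable def recordMap (x : ℤ → ℤ) (n : ℤ) : ℤ :=
  if ∃ j : ℤ, n < j ∧ 0 ≤ ∑ l ∈ Finset.Ico n j, x l then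
    sInf {j : ℤ | n < j ∧ 0 ≤ ∑ l ∈ Finset.Ico n j, x l}
  else n

lemma recordMap_mem (x : ℤ → ℤ) (n : ℤ)
    (h : ∃ j : ℤ, n < j ∧ 0 ≤ ∑ l ∈ Finset.Ico n j, x l) :
    n < recordMap x n ∧ 0 ≤ ∑ l ∈ Finset.Ico n (recordMap x n), x l := by
  rw [recordMap, if_pos h]
  have hbdd : BddBelow {j : ℤ | n < j ∧ 0 ≤ ∑ l ∈ Finset.Ico n j, x l} :=
    ⟨n, fun k hk => le_of_lt hk.1⟩
  exact Int.csInf_mem h hbdd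

lemma recordMap_le (x : ℤ → ℤ) (n : ℤ)
    (h : ∃ j : ℤ, n < j ∧ 0 ≤ ∑ l ∈ Finset.Ico n j, x l)
    (k : ℤ) (hk : n < k) (hk2 : 0 ≤ ∑ l ∈ Finset.Ico n k, x l) :
    recordMap x n ≤ k := by
  rw [recordMap, if_pos h]
  have hbdd : BddBelow {j : ℤ | n < j ∧ 0 ≤ ∑ l ∈ Finset.Ico n j, x l} :=
    ⟨n, fun m hm => le_of_lt hm.1⟩
  exact csInf_le hbdd ⟨hk, hk2⟩

/-- Interval property: if `R_x(i) > i`, then every integer `j` with `i ≤ j < R_x(i)`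
is a descendant of `R_x(i)`. -/
theorem interval_property (x : ℤ → ℤ) (i : ℤ) (hi : i < recordMap x i)
    (j : ℤ) (hij : i ≤ j) (hj : j < recordMap x i) :
    ∃ m : ℕ, 1 ≤ m ∧ (recordMap x)^[m] j = recordMap x i := by
  set r := recordMap x i with hr
  have hcond : ∃ k : ℤ, i < k ∧ 0 ≤ ∑ l ∈ Finset.Ico i k, x l := by
    by_contra h
    rw [hr, recordMap, if_neg h] at hi
    exact lt_irrefl i hi
  obtain ⟨-, hsum_ir⟩ := recordMap_mem x i hcond
  rw [← hr] at hsum_ir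
  -- key: for i ≤ j < r, the sum over [j, r) is nonneg
  have key : ∀ j : ℤ, i ≤ j → j < r → 0 ≤ ∑ l ∈ Finset.Ico j r, x l := by
    intro j h1 h2
    have hij0 : ∑ l ∈ Finset.Ico i j, x l ≤ 0 := by
      rcases eq_or_lt_of_le h1 with heq | hlt
      · simp [← heq]
      · by_contra hc
        push_neg at hc
        have := recordMap_le x i hcond j hlt (le_of_lt hc)
        rw [← hr] at this
        omega
    have hsplit : ∑ l ∈ Finset.Ico i j, x l + ∑ l ∈ Finset.Ico j r, x l
        = ∑ l ∈ Finset.Ico i r, x l := by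
      rw [← Finset.sum_union (Finset.Ico_disjoint_Ico_consecutive i j r),
        Finset.Ico_union_Ico_eq_Ico h1 h2.le]
    omega
  have main : ∀ N : ℕ, ∀ j : ℤ, i ≤ j → j < r → (r - j).toNat ≤ N →
      ∃ m : ℕ, 1 ≤ m ∧ (recordMap x)^[m] j = r := by
    intro N
    induction N with
    | zero => intro j h1 h2 h3; omega
    | succ N ih =>
      intro j h1 h2 h3
      have hex : ∃ k : ℤ, j < k ∧ 0 ≤ ∑ l ∈ Finset.Ico j k, x l :=
        ⟨r, h2, key j h1 h2⟩
      obtain ⟨hlt, -⟩ := recordMap_mem x j hex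
      have hle : recordMap x j ≤ r := recordMap_le x j hex r h2 (key j h1 h2)
      rcases eq_or_lt_of_le hle with heq | hlt2
      · exact ⟨1, le_refl 1, by simpa using heq⟩
      · obtain ⟨m, hm, hiter⟩ := ih (recordMap x j) (h1.trans hlt.le) hlt2 (by omega)
        exact ⟨m + 1, by omega, by
          rw [Function.iterate_succ_apply]; exact hiter⟩
  exact main (r - j).toNat j hij hj le_rfl
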